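/- arXiv:0902.0202 — 2 statements merged into one kernel-verified Lean document; each statement's English description precedes it below -/
import Mathlib

section
/- Let G be a group with finite generating set X, let Γ_n be the set of all geodesic words of length n over X, and for a geodesic word w let d_-(w) = {x ∈ X : ℓ(wx) < ℓ(w)} where ℓ denotes geodesic length. Then the number of distinct group elements of geodesic length exactly n equals the sum over w ∈ Γ_n of the product over i = 1..n of 1/|d_-(w_i)|, where w_i denotes the prefix of w of length i. -/
open scoped Classical

/-- The geodesic length of `g` with respect to the generating set `X`:
the least length of a word over `X` representing `g`. -/
noncomputable def glen {G : Type*} [Group G] (X : Finset G) (g : G) : ℕ :=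
  sInf {n : ℕ | ∃ w : List G, (∀ x ∈ w, x ∈ X) ∧ w.prod = g ∧ w.length = n}

/-- A word over `X` is geodesic if its length is the geodesic length of the
element it represents. -/
def IsGeodesic {G : Type*} [Group G] (X : Finset G) (w : List G) : Prop :=
  (∀ x ∈ w, x ∈ X) ∧ w.length = glen X w.prod

/-- The set of generators that shorten the element represented by `w`. -/
noncomputable def dminus {G : Type*} [Group G] (X : Finset G) (w : List G) : Finset G :=
  X.filter fun x => glen X (w.prod * x) < glen X w.prod

section Aux

variable {G : Type*} [Group G] (X : Finset G)

lemma exists_word (hinv : ∀ x ∈ X, x⁻¹ ∈ X) (hgen : Subgroup.closure (X : Set G) = ⊤)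
    (g : G) : ∃ w : List G, (∀ x ∈ w, x ∈ X) ∧ w.prod = g := by
  have hg : g ∈ Subgroup.closure (X : Set G) := by rw [hgen]; trivial
  induction hg using Subgroup.closure_induction with
  | mem x hx => exact ⟨[x], by simpa using hx, by simp⟩
  | one => exact ⟨[], by simp, by simp⟩
  | mul x y _ _ ihx ihy =>
      obtain ⟨w1, h1, h2⟩ := ihx
      obtain ⟨w2, h3, h4⟩ := ihy
      refine ⟨w1 ++ w2, ?_, by simp [h2, h4]⟩
      intro z hz
      rcases List.mem_append.mp hz with h | h
      · exact h1 z h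
      · exact h3 z h
  | inv x _ ihx =>
      obtain ⟨w, h1, h2⟩ := ihx
      refine ⟨(w.map (·⁻¹)).reverse, ?_, ?_⟩
      · intro z hz
        simp only [List.mem_reverse, List.mem_map] at hz
        obtain ⟨a, ha, rfl⟩ := hz
        exact hinv a (h1 a ha)
      · rw [List.prod_reverse_noncomm]
        simp [h2]

lemma glen_le (w : List G) (hw : ∀ x ∈ w, x ∈ X) : glen X w.prod ≤ w.length :=
  Nat.sInf_le ⟨w, hw, rfl, rfl⟩

lemma exists_geodesic (hinv : ∀ x ∈ X, x⁻¹ ∈ X) (hgen : Subgroup.closure (X : Set G) = ⊤)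
    (g : G) : ∃ w : List G, (∀ x ∈ w, x ∈ X) ∧ w.prod = g ∧ w.length = glen X g := by
  have hne : {n : ℕ | ∃ w : List G, (∀ x ∈ w, x ∈ X) ∧ w.prod = g ∧ w.length = n}.Nonempty := by
    obtain ⟨w, h1, h2⟩ := exists_word X hinv hgen g
    exact ⟨w.length, w, h1, h2, rfl⟩
  obtain ⟨w, h1, h2, h3⟩ := Nat.sInf_mem hne
  exact ⟨w, h1, h2, h3⟩

lemma glen_one : glen X 1 = 0 :=
  Nat.le_zero.mp (by simpa using glen_le X [] (by simp))

lemma glen_eq_zero_iff (hinv : ∀ x ∈ X, x⁻¹ ∈ X) (hgen : Subgroup.closure (X : Set G) = ⊤)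
    (g : G) : glen X g = 0 ↔ g = 1 := by
  constructor
  · intro h
    obtain ⟨w, h1, h2, h3⟩ := exists_geodesic X hinv hgen g
    rw [h] at h3
    rw [← h2, List.length_eq_zero_iff.mp h3, List.prod_nil]
  · rintro rfl; exact glen_one X

lemma glen_mul_le (hinv : ∀ x ∈ X, x⁻¹ ∈ X) (hgen : Subgroup.closure (X : Set G) = ⊤)
    (g x : G) (hx : x ∈ X) : glen X (g * x) ≤ glen X g + 1 := by
  obtain ⟨w, h1, h2, h3⟩ := exists_geodesic X hinv hgen g
  have := glen_le X (w ++ [x]) (by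
    intro z hz
    rcases List.mem_append.mp hz with h | h
    · exact h1 z h
    · simp at h; subst h; exact hx)
  simpa [h2, h3] using this

lemma glen_le_mul (hinv : ∀ x ∈ X, x⁻¹ ∈ X) (hgen : Subgroup.closure (X : Set G) = ⊤)
    (g x : G) (hx : x ∈ X) : glen X g ≤ glen X (g * x) + 1 := by
  have := glen_mul_le X hinv hgen (g * x) x⁻¹ (hinv x hx)
  simpa using this

lemma isGeodesic_take (hinv : ∀ x ∈ X, x⁻¹ ∈ X) (hgen : Subgroup.closure (X : Set G) = ⊤)
    {w : List G} (hw : IsGeodesic X w) (k : ℕ) : IsGeodesic X (w.take k) := by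
  obtain ⟨hmem, hlen⟩ := hw
  have hmem' : ∀ x ∈ w.take k, x ∈ X := fun x hx => hmem x (List.mem_of_mem_take hx)
  refine ⟨hmem', ?_⟩
  refine le_antisymm ?_ (glen_le X _ hmem')
  by_contra hlt
  push_neg at hlt
  obtain ⟨u, hu1, hu2, hu3⟩ := exists_geodesic X hinv hgen (w.take k).prod
  have hprod : (u ++ w.drop k).prod = w.prod := by
    rw [List.prod_append, hu2, ← List.prod_append, List.take_append_drop]
  have hle := glen_le X (u ++ w.drop k) (by
    intro z hz
    rcases List.mem_append.mp hz with h | h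
    · exact hu1 z h
    · exact hmem z (List.mem_of_mem_drop h))
  rw [hprod, ← hlen] at hle
  simp only [List.length_append] at hle
  have h2 : (w.take k).length + (w.drop k).length = w.length := by
    rw [← List.length_append, List.take_append_drop]
  omega

lemma dminus_congr {w w' : List G} (h : w.prod = w'.prod) : dminus X w = dminus X w' := by
  simp [dminus, h]

lemma dminus_nonempty (hinv : ∀ x ∈ X, x⁻¹ ∈ X) {w : List G} (hw : IsGeodesic X w)
    (hne : w ≠ []) : (dminus X w).Nonempty := by
  refine ⟨(w.getLast hne)⁻¹, ?_⟩
  rw [dminus, Finset.mem_filter]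
  refine ⟨hinv _ (hw.1 _ (List.getLast_mem hne)), ?_⟩
  have hsplit : w.dropLast ++ [w.getLast hne] = w := List.dropLast_append_getLast hne
  have hdrop : w.dropLast.prod = w.prod * (w.getLast hne)⁻¹ := by
    have h := congrArg List.prod hsplit
    simp only [List.prod_append, List.prod_singleton] at h
    rw [← h]
    group
  have h1 : glen X (w.prod * (w.getLast hne)⁻¹) ≤ w.dropLast.length := by
    rw [← hdrop]
    exact glen_le X _ (fun x hx => hw.1 x (List.mem_of_mem_dropLast hx))
  have h2 : w.dropLast.length < w.length := by
    rw [List.length_dropLast]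
    have : w.length ≠ 0 := fun h => hne (List.length_eq_zero_iff.mp h)
    omega
  have h3 := hw.2
  omega

lemma finite_words (n : ℕ) : {w : List G | (∀ x ∈ w, x ∈ X) ∧ w.length = n}.Finite := by
  induction n with
  | zero =>
      refine Set.Finite.subset (Set.finite_singleton ([] : List G)) ?_
      intro w hw
      simp only [Set.mem_setOf_eq] at hw
      simp [List.length_eq_zero_iff.mp hw.2]
  | succ n ih =>
      refine Set.Finite.subset (Set.Finite.image2 (· :: ·) X.finite_toSet ih) ?_
      rintro (_ | ⟨a, t⟩) ⟨hmem, hlen⟩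
      · simp at hlen
      · exact Set.mem_image2_of_mem (hmem a (by simp))
          ⟨fun x hx => hmem x (by simp [hx]), by simpa using hlen⟩

lemma finite_geodesics (n : ℕ) : {w : List G | IsGeodesic X w ∧ w.length = n}.Finite :=
  (finite_words X n).subset fun w hw => ⟨hw.1.1, hw.2⟩

lemma finite_sphere (hinv : ∀ x ∈ X, x⁻¹ ∈ X) (hgen : Subgroup.closure (X : Set G) = ⊤)
    (n : ℕ) : {g : G | glen X g = n}.Finite := by
  refine Set.Finite.subset ((finite_geodesics X n).image List.prod) ?_
  intro g hg
  obtain ⟨w, h1, h2, h3⟩ := exists_geodesic X hinv hgen g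
  exact ⟨w, ⟨⟨h1, by rw [h2]; exact h3⟩, by rw [h3, hg]⟩, h2⟩

lemma key (hinv : ∀ x ∈ X, x⁻¹ ∈ X) (hgen : Subgroup.closure (X : Set G) = ⊤) :
    ∀ n : ℕ, ∀ g : G, glen X g = n →
    ∑ w ∈ (finite_geodesics X n).toFinset.filter (fun w => w.prod = g),
      ∏ i ∈ Finset.range n, (1 : ℚ) / ((dminus X (w.take (i + 1))).card : ℚ) = 1 := by
  intro n
  induction n with
  | zero =>
      intro g hg
      have hg1 : g = 1 := (glen_eq_zero_iff X hinv hgen g).mp hg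
      have hset : (finite_geodesics X 0).toFinset.filter (fun w => w.prod = g)
          = {([] : List G)} := by
        ext w
        simp only [Finset.mem_filter, Set.Finite.mem_toFinset, Set.mem_setOf_eq,
          Finset.mem_singleton]
        constructor
        · rintro ⟨⟨_, hlen⟩, _⟩
          exact List.length_eq_zero_iff.mp hlen
        · rintro rfl
          refine ⟨⟨⟨by simp, by simp [glen_one]⟩, rfl⟩, by simp [hg1]⟩
      rw [hset]
      simp
  | succ n ih =>
      intro g hg
      set Dg : Finset G := X.filter (fun x => glen X (g * x) < glen X g) with hDg
      have hdm : ∀ w : List G, w.prod = g → dminus X w = Dg := by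
        intro w hw; simp [dminus, hDg, hw]
      obtain ⟨w₀, hw₀1, hw₀2, hw₀3⟩ := exists_geodesic X hinv hgen g
      have hw₀geo : IsGeodesic X w₀ := ⟨hw₀1, by rw [hw₀2]; exact hw₀3⟩
      have hw₀ne : w₀ ≠ [] := by
        intro h; rw [h] at hw₀3; rw [hg] at hw₀3; simp at hw₀3
      have hDne : Dg.Nonempty := by
        obtain ⟨x, hx⟩ := dminus_nonempty X hinv hw₀geo hw₀ne
        rw [hdm w₀ hw₀2] at hx; exact ⟨x, hx⟩
      have hDcard : ((Dg.card : ℚ)) ≠ 0 :=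
        Nat.cast_ne_zero.mpr (Finset.card_ne_zero.mpr hDne)
      have hglen : ∀ x ∈ Dg, glen X (g * x) = n := by
        intro x hx
        rw [hDg, Finset.mem_filter] at hx
        have h1 : glen X (g * x) < n + 1 := hg ▸ hx.2
        have h2 := glen_le_mul X hinv hgen g x hx.1
        omega
      have hset : (finite_geodesics X (n + 1)).toFinset.filter (fun w => w.prod = g)
          = Dg.biUnion (fun x => ((finite_geodesics X n).toFinset.filter
              (fun w => w.prod = g * x)).image (fun w' => w' ++ [x⁻¹])) := by
        ext w
        simp only [Finset.mem_biUnion, Finset.mem_filter, Finset.mem_image,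
          Set.Finite.mem_toFinset, Set.mem_setOf_eq]
        constructor
        · rintro ⟨⟨hwgeo, hwlen⟩, hwprod⟩
          have hne : w ≠ [] := by intro h; rw [h] at hwlen; simp at hwlen
          have hsplit : w.dropLast ++ [w.getLast hne] = w := List.dropLast_append_getLast hne
          have haX : w.getLast hne ∈ X := hwgeo.1 _ (List.getLast_mem hne)
          have hdlen : w.dropLast.length = n := by
            rw [List.length_dropLast, hwlen]
            omega
          have hdgeo : IsGeodesic X w.dropLast := by
            rw [List.dropLast_eq_take]
            exact isGeodesic_take X hinv hgen hwgeo _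
          have hdprod : w.dropLast.prod = g * (w.getLast hne)⁻¹ := by
            have h := congrArg List.prod hsplit
            simp only [List.prod_append, List.prod_singleton] at h
            rw [← hwprod, ← h]
            group
          refine ⟨(w.getLast hne)⁻¹, ?_, w.dropLast, ⟨⟨hdgeo, hdlen⟩, hdprod⟩, by
            simp [hsplit]⟩
          rw [hDg, Finset.mem_filter]
          refine ⟨hinv _ haX, ?_⟩
          rw [← hdprod]
          calc glen X w.dropLast.prod ≤ w.dropLast.length := glen_le X _ hdgeo.1
            _ = n := hdlen
            _ < n + 1 := by omega
            _ = glen X g := hg.symm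
        · rintro ⟨x, hx, w', ⟨⟨hw'geo, hw'len⟩, hw'prod⟩, rfl⟩
          have hxX : x ∈ X := (Finset.mem_filter.mp (hDg ▸ hx)).1
          have hprod : (w' ++ [x⁻¹]).prod = g := by
            simp [hw'prod]
          have hmem : ∀ z ∈ w' ++ [x⁻¹], z ∈ X := by
            intro z hz
            rcases List.mem_append.mp hz with h | h
            · exact hw'geo.1 z h
            · simp at h; subst h; exact hinv x hxX
          refine ⟨⟨⟨hmem, ?_⟩, by simp [hw'len]⟩, hprod⟩
          rw [hprod]
          simp [hw'len, ← hg]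
      rw [hset]
      rw [Finset.sum_biUnion]
      · have hinner : ∀ x ∈ Dg,
            ∑ w ∈ ((finite_geodesics X n).toFinset.filter
              (fun w => w.prod = g * x)).image (fun w' => w' ++ [x⁻¹]),
              ∏ i ∈ Finset.range (n + 1),
                (1 : ℚ) / ((dminus X (w.take (i + 1))).card : ℚ)
            = 1 / (Dg.card : ℚ) := by
          intro x hx
          rw [Finset.sum_image (by
            intro a _ b _ hab
            exact List.append_left_injective _ hab)]
          have hterm : ∀ w' ∈ (finite_geodesics X n).toFinset.filter
              (fun w => w.prod = g * x),
              ∏ i ∈ Finset.range (n + 1),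
                (1 : ℚ) / ((dminus X ((w' ++ [x⁻¹]).take (i + 1))).card : ℚ)
              = (∏ i ∈ Finset.range n,
                  (1 : ℚ) / ((dminus X (w'.take (i + 1))).card : ℚ)) * (1 / (Dg.card : ℚ)) := by
            intro w' hw'
            simp only [Finset.mem_filter, Set.Finite.mem_toFinset, Set.mem_setOf_eq] at hw'
            obtain ⟨⟨hw'geo, hw'len⟩, hw'prod⟩ := hw'
            rw [Finset.prod_range_succ]
            congr 1
            · refine Finset.prod_congr rfl ?_
              intro i hi
              rw [Finset.mem_range] at hi
              rw [List.take_append_of_le_length (by omega)]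
            · have h1 : (w' ++ [x⁻¹]).take (n + 1) = w' ++ [x⁻¹] :=
                List.take_of_length_le (by simp [hw'len])
              rw [h1, hdm _ (by simp [hw'prod])]
          rw [Finset.sum_congr rfl hterm, ← Finset.sum_mul, ih (g * x) (hglen x hx), one_mul]
        rw [Finset.sum_congr rfl hinner]
        rw [Finset.sum_const, nsmul_eq_mul]
        field_simp
      · intro x hx y hy hxy
        simp only [Finset.disjoint_left, Finset.mem_image, Finset.mem_filter,
          Set.Finite.mem_toFinset, Set.mem_setOf_eq]
        rintro w ⟨w1, ⟨⟨_, h1len⟩, _⟩, rfl⟩ ⟨w2, ⟨⟨_, h2len⟩, _⟩, heq⟩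
        have := List.append_inj heq.symm (by rw [h1len, h2len])
        exact hxy (by simpa using this.2)
      
end Aux

/-- The number of elements of geodesic length exactly `n` equals the sum over all
geodesic words `w` of length `n` of `∏_{i=1}^n 1/|d_-(w_i)|`, `w_i` the prefix of
length `i`. -/
theorem sphere_card_eq_sum_over_geodesics {G : Type*} [Group G]
    (X : Finset G) (hinv : ∀ x ∈ X, x⁻¹ ∈ X)
    (hgen : Subgroup.closure (X : Set G) = ⊤) (n : ℕ) :
    (Nat.card {g : G | glen X g = n} : ℚ) =
      ∑ᶠ w ∈ {w : List G | IsGeodesic X w ∧ w.length = n},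
        ∏ i ∈ Finset.range n, (1 : ℚ) / ((dminus X (w.take (i + 1))).card : ℚ) := by
  have hΓ := finite_geodesics X n
  have hS := finite_sphere X hinv hgen n
  rw [← hΓ.coe_toFinset, finsum_mem_coe_finset]
  have hmaps : ∀ w ∈ hΓ.toFinset, w.prod ∈ hS.toFinset := by
    intro w hw
    rw [Set.Finite.mem_toFinset] at hw ⊢
    rw [Set.mem_setOf_eq, ← hw.1.2, hw.2]
  rw [← Finset.sum_fiberwise_of_maps_to hmaps]
  have hfib : ∀ g ∈ hS.toFinset,
      ∑ w ∈ hΓ.toFinset.filter (fun w => w.prod = g),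
        ∏ i ∈ Finset.range n, (1 : ℚ) / ((dminus X (w.take (i + 1))).card : ℚ) = 1 := by
    intro g hgmem
    rw [Set.Finite.mem_toFinset] at hgmem
    exact key X hinv hgen n g hgmem
  rw [Finset.sum_congr rfl hfib, Finset.sum_const, nsmul_eq_mul, mul_one]
  rw [Nat.card_coe_set_eq, Set.ncard_eq_toFinset_card _ hS]
end

section
/- Suppose f : ℕ → ℕ is submultiplicative with f(n) ≥ 1, and suppose f(22) = 9035758992. Then the growth rate γ = lim f(n)^{1/n} satisfies γ ≤ 9035758992^{1/22} < 2.835. -/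
open Filter

private lemma f22pow (f : ℕ → ℕ) (hsub : ∀ n m : ℕ, f (n + m) ≤ f n * f m) :
    ∀ k, 1 ≤ k → f (22 * k) ≤ f 22 ^ k := by
  intro k
  induction k with
  | zero => omega
  | succ k ih =>
      intro _
      rcases Nat.eq_zero_or_pos k with rfl | hk
      · simpa using le_refl (f 22)
      have ih := ih hk
      calc f (22 * (k + 1)) = f (22 * k + 22) := by ring_nf
        _ ≤ f (22 * k) * f 22 := hsub _ _
        _ ≤ f 22 ^ k * f 22 := Nat.mul_le_mul_right _ ih
        _ = f 22 ^ (k + 1) := by ring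

/-- If `f` is submultiplicative with `f n ≥ 1` and `f 22 = 9035758992`, then the
growth rate `γ = lim f(n)^{1/n}` satisfies `γ ≤ 9035758992^{1/22} < 2.835`. -/
theorem growth_rate_upper_bound_from_f22 (f : ℕ → ℕ)
    (hpos : ∀ n, 1 ≤ f n)
    (hsub : ∀ n m : ℕ, f (n + m) ≤ f n * f m)
    (h22 : f 22 = 9035758992) :
    ∀ γ : ℝ, Tendsto (fun n : ℕ => (f n : ℝ) ^ ((1 : ℝ) / n)) atTop (nhds γ) →
      γ ≤ (9035758992 : ℝ) ^ ((1 : ℝ) / 22) ∧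
        (9035758992 : ℝ) ^ ((1 : ℝ) / 22) < 2.835 := by
  intro γ hγ
  constructor
  · -- subsequence n = 22k
    have hsubseq : Tendsto (fun k : ℕ => (f (22 * k) : ℝ) ^ ((1 : ℝ) / (22 * k : ℕ)))
        atTop (nhds γ) := by
      exact hγ.comp (tendsto_atTop_atTop_of_monotone
        (fun a b h => Nat.mul_le_mul_left _ h)
        (fun b => ⟨b, Nat.le_mul_of_pos_left b (by norm_num)⟩))
    refine le_of_tendsto hsubseq ?_
    filter_upwards [eventually_ge_atTop 1] with k hk
    have hb : (f (22 * k) : ℝ) ≤ (9035758992 : ℝ) ^ (k : ℕ) := by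
      have := f22pow f hsub k hk
      rw [h22] at this
      exact_mod_cast this
    have h1 : (f (22 * k) : ℝ) ^ ((1 : ℝ) / (22 * k : ℕ)) ≤
        ((9035758992 : ℝ) ^ (k : ℕ)) ^ ((1 : ℝ) / (22 * k : ℕ)) :=
      Real.rpow_le_rpow (by positivity) hb (by positivity)
    have h2 : ((9035758992 : ℝ) ^ (k : ℕ)) ^ ((1 : ℝ) / (22 * k : ℕ)) =
        (9035758992 : ℝ) ^ ((1 : ℝ) / 22) := by
      rw [← Real.rpow_natCast (9035758992 : ℝ) k, ← Real.rpow_mul (by norm_num)]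
      congr 1
      have hk' : (k : ℝ) ≠ 0 := Nat.cast_ne_zero.mpr (by omega)
      push_cast
      field_simp
    exact h1.trans_eq h2
  · -- numeric bound
    have hc : (0 : ℝ) ≤ (9035758992 : ℝ) ^ ((1 : ℝ) / 22) := Real.rpow_nonneg (by norm_num) _
    by_contra h
    push_neg at h
    have h22' : ((9035758992 : ℝ) ^ ((1 : ℝ) / 22)) ^ (22 : ℕ) = 9035758992 := by
      rw [← Real.rpow_natCast _ 22, ← Real.rpow_mul (by norm_num)]
      norm_num
    have := pow_le_pow_left₀ (by norm_num : (0:ℝ) ≤ 2.835) h 22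
    rw [h22'] at this
    norm_num at this
end
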